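/- (Anderson–Morley bound for quivers.) Let n ≥ 2 and let K be a symmetric n×n integer matrix with K_{ij} ≤ 0 for all i ≠ j and with every row sum ∑_j K_{ij} ≥ 0 (i.e., K is the Kirchhoff matrix of a quiver). Then the largest eigenvalue of K satisfies λ_n ≤ d_n + d_{n−1}, where d_n and d_{n−1} are the largest and second largest diagonal entries of K. -/

import Mathlib

open Matrix

/-- Real arithmetic core of the Anderson–Morley argument. -/
lemma am_aux (μ a b p q : ℝ) (ha : 0 ≤ a) (hb : 0 ≤ b) (hp : 0 < p) (hq : 0 ≤ q)
    (h1 : (μ - a) * p ≤ a * q) (h2 : (μ - b) * q ≤ b * p) : μ ≤ a + b := by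
  by_cases h3 : μ ≤ a
  · linarith
  by_cases h4 : μ ≤ b
  · linarith
  push_neg at h3 h4
  rcases eq_or_lt_of_le hq with hq0 | hq0
  · exfalso; nlinarith
  · nlinarith [mul_pos hp hq0]

/-- Sum of two distinct values is at most sum of the two largest sorted values. -/
lemma am_pair {n : ℕ} (hn : 2 ≤ n) (g : Fin n → ℤ) (u v : Fin n) (huv : u ≠ v) :
    g u + g v ≤ (g ∘ Tuple.sort g) ⟨n - 1, Nat.sub_lt (by omega) Nat.one_pos⟩ + (g ∘ Tuple.sort g) ⟨n - 2, Nat.sub_lt (by omega) Nat.two_pos⟩ := by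
  set σ := Tuple.sort g with hσ
  have hmono : Monotone (g ∘ σ) := Tuple.monotone_sort g
  set a := σ.symm u with hA
  set b := σ.symm v with hB
  have hga : g u = (g ∘ σ) a := by simp [hA]
  have hgb : g v = (g ∘ σ) b := by simp [hB]
  have hab : a ≠ b := fun h => huv (by
    have := congrArg σ h
    simpa [hA, hB] using this)
  have htop : ∀ c : Fin n, (g ∘ σ) c ≤ (g ∘ σ) ⟨n - 1, by omega⟩ := by
    intro c
    apply hmono
    rw [Fin.le_def]
    have := c.isLt
    simp only []
    omega
  have hsec : ∀ c : Fin n, (c : ℕ) ≤ n - 2 → (g ∘ σ) c ≤ (g ∘ σ) ⟨n - 2, by omega⟩ := by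
    intro c hc
    apply hmono
    rw [Fin.le_def]
    simpa using hc
  rcases lt_or_gt_of_ne hab with h | h
  · have h1 : (a : ℕ) < (b : ℕ) := h
    have hb' := b.isLt
    have h2 : (a : ℕ) ≤ n - 2 := by omega
    rw [hga, hgb]
    have := hsec a h2
    have := htop b
    omega
  · have h1 : (b : ℕ) < (a : ℕ) := h
    have ha' := a.isLt
    have h2 : (b : ℕ) ≤ n - 2 := by omega
    rw [hga, hgb]
    have := hsec b h2
    have := htop a
    omega

/-- **Anderson–Morley bound for quivers.**
If `K` is the Kirchhoff matrix of a quiver (symmetric integer matrix with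
nonpositive off-diagonal entries and nonnegative row sums) on `n ≥ 2` vertices,
then the largest eigenvalue satisfies `λ_n ≤ d_n + d_{n-1}`, where `d_n` and
`d_{n-1}` are the largest and second largest diagonal entries. -/
theorem quiver_spectral_radius_anderson_morley
    (n : ℕ) (hn : 2 ≤ n) (K : Matrix (Fin n) (Fin n) ℤ)
    (hsym : K.IsSymm)
    (hoff : ∀ i j : Fin n, i ≠ j → K i j ≤ 0)
    (hrow : ∀ i : Fin n, 0 ≤ ∑ j, K i j)
    (hK : (K.map (Int.cast : ℤ → ℝ)).IsHermitian)
    (lam : Fin n → ℝ)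
    (hlam : lam = hK.eigenvalues ∘ Tuple.sort hK.eigenvalues)
    (d : Fin n → ℤ)
    (hd : d = (fun i => K i i) ∘ Tuple.sort (fun i => K i i)) :
    lam ⟨n - 1, by omega⟩ ≤
      (d ⟨n - 1, by omega⟩ : ℝ) + (d ⟨n - 2, by omega⟩ : ℝ) := by
  -- basic diagonal facts
  have hdiag : ∀ i : Fin n, ∑ j ∈ Finset.univ.erase i, (-(K i j)) ≤ K i i := by
    intro i
    have h0 := hrow i
    rw [← Finset.add_sum_erase Finset.univ (fun j => K i j) (Finset.mem_univ i)] at h0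
    have h1 : ∑ j ∈ Finset.univ.erase i, (-(K i j)) = -∑ j ∈ Finset.univ.erase i, K i j := by
      simp
    linarith
  have hg0 : ∀ i : Fin n, 0 ≤ K i i := by
    intro i
    refine le_trans ?_ (hdiag i)
    apply Finset.sum_nonneg
    intro j hj
    have : j ≠ i := Finset.ne_of_mem_erase hj
    have := hoff i j (Ne.symm this)
    linarith
  -- eigenvalue and eigenvector
  set i0 : Fin n := Tuple.sort hK.eigenvalues ⟨n - 1, by omega⟩ with hi0
  set μ : ℝ := hK.eigenvalues i0 with hμ
  set x : Fin n → ℝ := ⇑(hK.eigenvectorBasis i0) with hx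
  have hxeq : (K.map (Int.cast : ℤ → ℝ)) *ᵥ x = μ • x := hK.mulVec_eigenvectorBasis i0
  have hxne : ∃ j, x j ≠ 0 := by
    have hne := hK.eigenvectorBasis.orthonormal.ne_zero i0
    by_contra hcon
    push_neg at hcon
    exact hne (by ext j; exact hcon j)
  have hμu : ∀ u : Fin n, μ * x u = ∑ j, (K u j : ℝ) * x j := by
    intro u
    have := congrFun hxeq u
    simpa [Matrix.mulVec, dotProduct, Matrix.map_apply] using this.symm
  -- key inequality
  have key : ∀ u w : Fin n, (∀ j, j ≠ u → |x j| ≤ |x w|) →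
      (μ - (K u u : ℝ)) * |x u| ≤ (K u u : ℝ) * |x w| := by
    intro u w hw
    have h0 := hμu u
    rw [← Finset.add_sum_erase Finset.univ (fun j => (K u j : ℝ) * x j)
      (Finset.mem_univ u)] at h0
    have h1 : (μ - (K u u : ℝ)) * x u = ∑ j ∈ Finset.univ.erase u, (K u j : ℝ) * x j := by
      linear_combination h0
    have hErow : ∑ j ∈ Finset.univ.erase u, (-(K u j : ℝ)) ≤ (K u u : ℝ) := by
      have := hdiag u
      exact_mod_cast this
    calc (μ - (K u u : ℝ)) * |x u|
        ≤ |μ - (K u u : ℝ)| * |x u| :=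
          mul_le_mul_of_nonneg_right (le_abs_self _) (abs_nonneg _)
      _ = |(μ - (K u u : ℝ)) * x u| := (abs_mul _ _).symm
      _ = |∑ j ∈ Finset.univ.erase u, (K u j : ℝ) * x j| := by rw [h1]
      _ ≤ ∑ j ∈ Finset.univ.erase u, |(K u j : ℝ) * x j| := Finset.abs_sum_le_sum_abs _ _
      _ = ∑ j ∈ Finset.univ.erase u, (-(K u j : ℝ)) * |x j| := by
          refine Finset.sum_congr rfl fun j hj => ?_
          have hj' : j ≠ u := Finset.ne_of_mem_erase hj
          have hle : (K u j : ℝ) ≤ 0 := by exact_mod_cast hoff u j (Ne.symm hj')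
          rw [abs_mul, abs_of_nonpos hle]
      _ ≤ ∑ j ∈ Finset.univ.erase u, (-(K u j : ℝ)) * |x w| := by
          refine Finset.sum_le_sum fun j hj => ?_
          have hj' : j ≠ u := Finset.ne_of_mem_erase hj
          have hle : (K u j : ℝ) ≤ 0 := by exact_mod_cast hoff u j (Ne.symm hj')
          exact mul_le_mul_of_nonneg_left (hw j hj') (by linarith)
      _ = (∑ j ∈ Finset.univ.erase u, (-(K u j : ℝ))) * |x w| := by
          rw [Finset.sum_mul]
      _ ≤ (K u u : ℝ) * |x w| := mul_le_mul_of_nonneg_right hErow (abs_nonneg _)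
  -- choose u maximizing |x|
  obtain ⟨u, -, hu⟩ := Finset.exists_max_image Finset.univ (fun j => |x j|)
    ⟨⟨0, by omega⟩, Finset.mem_univ _⟩
  have hu' : ∀ j, |x j| ≤ |x u| := fun j => hu j (Finset.mem_univ j)
  -- choose v ≠ u maximizing |x| off u
  have : Nontrivial (Fin n) := Fin.nontrivial_iff_two_le.mpr hn
  obtain ⟨v0, hv0⟩ := exists_ne u
  obtain ⟨v, hvmem, hv⟩ := Finset.exists_max_image (Finset.univ.erase u) (fun j => |x j|)
    ⟨v0, Finset.mem_erase.mpr ⟨hv0, Finset.mem_univ _⟩⟩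
  have hvu : v ≠ u := Finset.ne_of_mem_erase hvmem
  have hv' : ∀ j, j ≠ u → |x j| ≤ |x v| := fun j hj =>
    hv j (Finset.mem_erase.mpr ⟨hj, Finset.mem_univ j⟩)
  have hxu : 0 < |x u| := by
    obtain ⟨j, hj⟩ := hxne
    exact lt_of_lt_of_le (abs_pos.mpr hj) (hu' j)
  -- the two inequalities
  have I1 : (μ - (K u u : ℝ)) * |x u| ≤ (K u u : ℝ) * |x v| := key u v hv'
  have I2 : (μ - (K v v : ℝ)) * |x v| ≤ (K v v : ℝ) * |x u| := key v u (fun j _ => hu' j)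
  have hmu : μ ≤ (K u u : ℝ) + (K v v : ℝ) :=
    am_aux μ (K u u : ℝ) (K v v : ℝ) (|x u|) (|x v|)
      (by exact_mod_cast hg0 u) (by exact_mod_cast hg0 v) hxu (abs_nonneg _) I1 I2
  have hpair : K u u + K v v ≤ d ⟨n - 1, by omega⟩ + d ⟨n - 2, by omega⟩ := by
    rw [hd]
    exact am_pair hn (fun i => K i i) u v (Ne.symm hvu)
  have hlam1 : lam ⟨n - 1, by omega⟩ = μ := by rw [hlam]; rfl
  rw [hlam1]
  calc μ ≤ (K u u : ℝ) + (K v v : ℝ) := hmu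
    _ ≤ (d ⟨n - 1, by omega⟩ : ℝ) + (d ⟨n - 2, by omega⟩ : ℝ) := by exact_mod_cast hpair
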